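/- Let V be a finite-dimensional real inner product space and let ω be a nondegenerate alternating bilinear form on V. Then there exists a linear map J : V → V such that J ∘ J = −id, ω(J x, J y) = ω(x, y) for all x, y ∈ V, and ω(x, J x) > 0 for every x ≠ 0. (Consequently g(x,y) := ω(x, J y) is an inner product compatible with ω and J.) -/

import Mathlib

open scoped RealInnerProductSpace
open Finset

theorem stmt0 {V : Type*} [NormedAddCommGroup V] [InnerProductSpace ℝ V]
    [FiniteDimensional ℝ V] (ω : V →ₗ[ℝ] V →ₗ[ℝ] ℝ)
    (halt : ∀ x, ω x x = 0)
    (hnd : ∀ x : V, x ≠ 0 → ∃ y : V, ω x y ≠ 0) :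
    ∃ J : V →ₗ[ℝ] V,
      (∀ x, J (J x) = -x) ∧
      (∀ x y, ω (J x) (J y) = ω x y) ∧
      (∀ x : V, x ≠ 0 → 0 < ω x (J x)) := by
  classical
  let A : V →ₗ[ℝ] V :=
    { toFun := fun x => (InnerProductSpace.toDual ℝ V).symm ((ω x).toContinuousLinearMap)
      map_add' := by intro x y; simp [map_add]
      map_smul' := by intro c x; simp [map_smul] }
  have hA : ∀ x y : V, ⟪A x, y⟫ = ω x y := by
    intro x y
    simp [A, InnerProductSpace.toDual_symm_apply]
  have hskew : ∀ x y : V, ω x y = - ω y x := by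
    intro x y
    have h := halt (x + y)
    simp only [map_add, LinearMap.add_apply, halt] at h
    linarith
  have hAskew : ∀ x y : V, ⟪A x, y⟫ = -⟪x, A y⟫ := by
    intro x y
    rw [hA, real_inner_comm, hA, hskew]
  have hAne : ∀ x : V, x ≠ 0 → A x ≠ 0 := by
    intro x hx hAx
    obtain ⟨y, hy⟩ := hnd x hx
    apply hy
    rw [← hA, hAx, inner_zero_left]
  let S : V →ₗ[ℝ] V := -(A ∘ₗ A)
  have hSapp : ∀ x : V, S x = -(A (A x)) := fun x => rfl
  have hAA : ∀ x : V, A (A x) = -(S x) := by intro x; rw [hSapp, neg_neg]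
  have hSsymm : S.IsSymmetric := by
    intro x y
    have h1 := hAskew (A x) y
    have h2 := hAskew (A y) x
    have h3 := real_inner_comm x (A (A y))
    have h4 := real_inner_comm (A y) (A x)
    simp only [hSapp, inner_neg_left, inner_neg_right]
    linarith
  have hSpos : ∀ x : V, x ≠ 0 → 0 < ⟪S x, x⟫ := by
    intro x hx
    rw [hSapp, inner_neg_left, hAskew, neg_neg, real_inner_self_eq_norm_sq]
    exact pow_pos (norm_pos_iff.mpr (hAne x hx)) 2
  let n := Module.finrank ℝ V
  have hrank : Module.finrank ℝ V = n := rfl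
  let e : OrthonormalBasis (Fin n) ℝ V := hSsymm.eigenvectorBasis hrank
  let μ : Fin n → ℝ := hSsymm.eigenvalues hrank
  have hSe : ∀ i, S (e i) = μ i • e i := fun i => hSsymm.apply_eigenvectorBasis hrank i
  have hene : ∀ i, e i ≠ 0 := by
    intro i h
    have := e.orthonormal.1 i
    rw [h] at this; simp at this
  have hμpos : ∀ i, 0 < μ i := by
    intro i
    have h1 : ⟪S (e i), e i⟫ = μ i := by
      rw [hSe, real_inner_smul_left, real_inner_self_eq_norm_sq, e.orthonormal.1 i]
      ring
    rw [← h1]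
    exact hSpos (e i) (hene i)
  have hortho : ∀ i j : Fin n, ⟪e i, e j⟫ = if i = j then 1 else 0 :=
    orthonormal_iff_ite.mp e.orthonormal
  let D : (Fin n → ℝ) → (V →ₗ[ℝ] V) := fun c => e.toBasis.constr ℝ (fun i => c i • e i)
  have hD : ∀ (c : Fin n → ℝ) (i : Fin n), D c (e i) = c i • e i := by
    intro c i
    have := e.toBasis.constr_basis ℝ (fun i => c i • e i) i
    rwa [e.coe_toBasis] at this
  have hDinner : ∀ (c : Fin n → ℝ) (x : V) (i : Fin n), ⟪e i, D c x⟫ = c i * ⟪e i, x⟫ := by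
    intro c x i
    conv_lhs => rw [← e.sum_repr' x]
    conv_rhs => rw [← e.sum_repr' x]
    rw [map_sum, inner_sum, inner_sum, Finset.mul_sum]
    refine Finset.sum_congr rfl fun j _ => ?_
    rw [map_smul, hD, real_inner_smul_right, real_inner_smul_right, real_inner_smul_right,
      hortho]
    by_cases h : i = j <;> simp [h] <;> ring
  have hDsymm : ∀ (c : Fin n → ℝ) (x y : V), ⟪D c x, y⟫ = ⟪x, D c y⟫ := by
    intro c x y
    rw [← e.sum_inner_mul_inner (D c x) y, ← e.sum_inner_mul_inner x (D c y)]
    refine Finset.sum_congr rfl fun i _ => ?_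
    have h1 : ⟪D c x, e i⟫ = c i * ⟪e i, x⟫ :=
      (real_inner_comm (e i) (D c x)).trans (hDinner c x i)
    have h2 := hDinner c y i
    have h3 := real_inner_comm x (e i)
    rw [h1, h2, h3]
    ring
  have heig : ∀ (f : ℝ → ℝ) (m : ℝ) (v : V), S v = m • v →
      D (fun i => f (μ i)) v = f m • v := by
    intro f m v hv
    conv_lhs => rw [← e.sum_repr' v]
    conv_rhs => rw [← e.sum_repr' v]
    rw [map_sum, Finset.smul_sum]
    refine Finset.sum_congr rfl fun i _ => ?_
    rw [map_smul, hD]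
    by_cases h : ⟪e i, v⟫ = 0
    · simp [h]
    · have hev : μ i * ⟪e i, v⟫ = m * ⟪e i, v⟫ := by
        have h1 : ⟪S (e i), v⟫ = ⟪e i, S v⟫ := hSsymm (e i) v
        rw [hSe, hv, real_inner_smul_left, real_inner_smul_right] at h1
        exact h1
      have hm : μ i = m := mul_right_cancel₀ h hev
      rw [hm, smul_comm]
  have hSA : ∀ x : V, S (A x) = A (S x) := by
    intro x
    rw [hSapp, hSapp, map_neg]
  have hcommA : ∀ (f : ℝ → ℝ) (x : V),
      D (fun i => f (μ i)) (A x) = A (D (fun i => f (μ i)) x) := by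
    intro f
    have h : D (fun i => f (μ i)) ∘ₗ A = A ∘ₗ D (fun i => f (μ i)) := by
      apply e.toBasis.ext
      intro i
      rw [e.coe_toBasis]
      simp only [LinearMap.comp_apply]
      rw [hD, map_smul]
      refine heig f (μ i) (A (e i)) ?_
      rw [hSA, hSe, map_smul]
    exact fun x => LinearMap.congr_fun h x
  have hSD : ∀ x : V, S x = D μ x := by
    have h : S = D μ := by
      apply e.toBasis.ext
      intro i
      rw [e.coe_toBasis, hSe, hD]
    exact fun x => LinearMap.congr_fun h x
  have hDD : ∀ (c c' : Fin n → ℝ) (x : V), D c (D c' x) = D (fun i => c i * c' i) x := by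
    intro c c'
    have h : D c ∘ₗ D c' = D (fun i => c i * c' i) := by
      apply e.toBasis.ext
      intro i
      rw [e.coe_toBasis]
      simp only [LinearMap.comp_apply]
      rw [hD, map_smul, hD, hD, smul_smul, mul_comm]
    exact fun x => LinearMap.congr_fun h x
  have hDone : ∀ (c : Fin n → ℝ), (∀ i, c i = 1) → ∀ x : V, D c x = x := by
    intro c hc
    have h : D c = LinearMap.id := by
      apply e.toBasis.ext
      intro i
      rw [e.coe_toBasis, hD, hc, one_smul, LinearMap.id_apply]
    exact fun x => LinearMap.congr_fun h x
  -- the compatible complex structure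
  let f : ℝ → ℝ := fun t => (Real.sqrt t)⁻¹
  let T : V →ₗ[ℝ] V := D (fun i => f (μ i))
  have hTA : ∀ x : V, T (A x) = A (T x) := hcommA f
  have hTsymm : ∀ x y : V, ⟪T x, y⟫ = ⟪x, T y⟫ := fun x y => hDsymm _ x y
  have hfμ : ∀ i, f (μ i) * (f (μ i) * μ i) = 1 := by
    intro i
    have h := hμpos i
    have hs : Real.sqrt (μ i) * Real.sqrt (μ i) = μ i := Real.mul_self_sqrt h.le
    have hs0 : (0:ℝ) < Real.sqrt (μ i) := Real.sqrt_pos.2 h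
    show (Real.sqrt (μ i))⁻¹ * ((Real.sqrt (μ i))⁻¹ * μ i) = 1
    rw [← hs]
    field_simp
    rw [Real.sqrt_sq hs0.le]
  have hSTg : ∀ x : V, S (T x) = D (fun i => μ i * f (μ i)) x := by
    intro x
    rw [hSD (T x)]
    exact hDD μ _ x
  have hSTT : ∀ x : V, S (T (T x)) = x := by
    intro x
    have h1 : T (T x) = D (fun i => f (μ i) * f (μ i)) x := hDD _ _ x
    rw [h1, hSD, hDD]
    exact hDone _ (fun i => by rw [← hfμ i]; ring) x
  have hTST : ∀ x : V, T (S (T x)) = x := by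
    intro x
    rw [hSTg]
    have h2 : T (D (fun i => μ i * f (μ i)) x)
        = D (fun i => f (μ i) * (μ i * f (μ i))) x := hDD _ _ x
    rw [h2]
    exact hDone _ (fun i => by rw [← hfμ i]; ring) x
  refine ⟨A ∘ₗ T, ?_, ?_, ?_⟩
  · intro x
    simp only [LinearMap.comp_apply]
    rw [hTA (T x), hAA (T (T x)), hSTT x]
  · intro x y
    simp only [LinearMap.comp_apply]
    rw [← hA (A (T x)) (A (T y)), ← hA x y]
    rw [hAA (T x), inner_neg_left, hSsymm (T x) (A (T y)), hTsymm x (S (A (T y))),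
      hSA (T y), hTA (S (T y)), hTST y, hAskew x y]
  · intro x hx
    simp only [LinearMap.comp_apply]
    rw [← hA x (A (T x)), hAskew x (A (T x)), hAA (T x), inner_neg_right, neg_neg, hSTg x]
    set g : Fin n → ℝ := fun i => μ i * f (μ i) with hg
    rw [real_inner_comm (D g x) x, ← e.sum_inner_mul_inner (D g x) x]
    have hterm : ∀ i, ⟪D g x, e i⟫ = g i * ⟪e i, x⟫ := fun i =>
      (real_inner_comm (e i) (D g x)).trans (hDinner g x i)
    have hgpos : ∀ i, 0 < g i := by
      intro i
      have h1 := hμpos i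
      have h2 : (0:ℝ) < Real.sqrt (μ i) := Real.sqrt_pos.2 h1
      exact mul_pos h1 (inv_pos.2 h2)
    have hx' : ∃ i, ⟪e i, x⟫ ≠ 0 := by
      by_contra h
      push_neg at h
      apply hx
      rw [← e.sum_repr' x]
      simp [h]
    obtain ⟨i0, hi0⟩ := hx'
    refine Finset.sum_pos' (fun i _ => ?_) ⟨i0, Finset.mem_univ i0, ?_⟩
    · rw [hterm i, mul_assoc]
      exact mul_nonneg (hgpos i).le (mul_self_nonneg _)
    · rw [hterm i0, mul_assoc]
      exact mul_pos (hgpos i0) (mul_self_pos.2 hi0)
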